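/- Suppose w : ℝ → ℝ satisfies 0 ≤ w(z) ≤ c/(1+e^{|z|}) for all z, for some constant c > 0. Let x_1,…,x_n ∈ ℝ^p span ℝ^p (n ≥ p), m_i > 0, and W(β) = diag(w(⟨x_1,β⟩),…,w(⟨x_n,β⟩)). Then sup over unit vectors u of det(Xᵀ M W(r u) X) → 0 as r → ∞, where X has rows x_i and M = diag(m_i). -/

import Mathlib

lemma psd_det_nonneg {q : ℕ} (M : Matrix (Fin q) (Fin q) ℝ) (h : M.PosSemidef) :
    0 ≤ M.det := by
  exact h.det_nonneg

lemma psd_aux {n p : ℕ} (X : Matrix (Fin n) (Fin p) ℝ) (d : Fin n → ℝ)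
    (hd : ∀ i, 0 ≤ d i) : (X.transpose * Matrix.diagonal d * X).PosSemidef := by
  set s : Fin n → ℝ := fun i => Real.sqrt (d i) with hs
  have h : X.transpose * Matrix.diagonal d * X
      = (Matrix.diagonal s * X).conjTranspose * (Matrix.diagonal s * X) := by
    rw [Matrix.conjTranspose_eq_transpose_of_trivial, Matrix.transpose_mul,
      Matrix.diagonal_transpose,
      Matrix.mul_assoc (X.transpose) (Matrix.diagonal s) (Matrix.diagonal s * X),
      ← Matrix.mul_assoc (Matrix.diagonal s) (Matrix.diagonal s) X,
      Matrix.diagonal_mul_diagonal, ← Matrix.mul_assoc,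
      show (fun i => s i * s i) = d from funext fun i => Real.mul_self_sqrt (hd i)]
  rw [h]
  exact Matrix.posSemidef_conjTranspose_mul_self _

lemma det_expand {n p : ℕ} (X : Matrix (Fin n) (Fin p) ℝ) (d : Fin n → ℝ) :
    (X.transpose * Matrix.diagonal d * X).det
      = ∑ f : Fin p → Fin n,
          (∏ j, (X (f j) j * d (f j))) * (X.submatrix f id).det := by
  have hA : (X.transpose * Matrix.diagonal d * X)
      = Matrix.of (fun j : Fin p => ∑ i : Fin n, (X i j * d i) • (X i : Fin p → ℝ)) := by
    ext j k
    simp [Matrix.mul_apply, Matrix.diagonal_apply, Finset.sum_ite_eq, Finset.mul_sum,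
      Matrix.mul_assoc, mul_comm, mul_left_comm]
  rw [hA]
  calc (Matrix.detRowAlternating
        (fun j : Fin p => ∑ i : Fin n, (X i j * d i) • (X i : Fin p → ℝ)) : ℝ)
      = ∑ f : Fin p → Fin n,
          Matrix.detRowAlternating
            (fun j : Fin p => (X (f j) j * d (f j)) • (X (f j) : Fin p → ℝ)) :=
        (Matrix.detRowAlternating (R := ℝ) (n := Fin p)).toMultilinearMap.map_sum
          (g := fun (j : Fin p) (i : Fin n) => (X i j * d i) • (X i : Fin p → ℝ))
    _ = ∑ f : Fin p → Fin n,
          (∏ j, (X (f j) j * d (f j))) * (X.submatrix f id).det := by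
        refine Finset.sum_congr rfl fun f _ => ?_
        rw [show Matrix.detRowAlternating
              (fun j : Fin p => (X (f j) j * d (f j)) • (X (f j) : Fin p → ℝ))
            = (Matrix.detRowAlternating (R := ℝ) (n := Fin p)).toMultilinearMap
                (fun j : Fin p => (X (f j) j * d (f j)) • (X (f j) : Fin p → ℝ)) from rfl,
          MultilinearMap.map_smul_univ]
        rfl

lemma aux_min {p : ℕ} (hp : 0 < p) (M : Matrix (Fin p) (Fin p) ℝ) (hM : M.det ≠ 0) :
    ∃ δ : ℝ, 0 < δ ∧ ∀ u : EuclideanSpace ℝ (Fin p), ‖u‖ = 1 →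
      δ ≤ ∑ j, |∑ k, M j k * u k| := by
  haveI : Nonempty (Fin p) := ⟨⟨0, hp⟩⟩
  haveI : Nontrivial (EuclideanSpace ℝ (Fin p)) := by
    refine ⟨0, EuclideanSpace.single ⟨0, hp⟩ 1, ?_⟩
    intro h
    have := congrArg (fun v : EuclideanSpace ℝ (Fin p) => v ⟨0, hp⟩) h.symm
    simp [EuclideanSpace.single_apply] at this
  have hcont : Continuous (fun u : EuclideanSpace ℝ (Fin p) => ∑ j, |∑ k, M j k * u k|) := by
    refine continuous_finset_sum _ fun j _ => ?_
    refine (continuous_finset_sum _ fun k _ => ?_).abs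
    exact (continuous_const.mul ((continuous_apply k).comp (PiLp.continuous_ofLp (p := 2) _)))
  have hsph : (Metric.sphere (0 : EuclideanSpace ℝ (Fin p)) 1).Nonempty :=
    NormedSpace.sphere_nonempty.mpr zero_le_one
  obtain ⟨u0, hu0, hmin⟩ := (isCompact_sphere (0 : EuclideanSpace ℝ (Fin p)) 1).exists_isMinOn
    hsph hcont.continuousOn
  have hu0n : ‖u0‖ = 1 := by simpa using mem_sphere_zero_iff_norm.mp hu0
  refine ⟨_, ?_, fun u hu => hmin (mem_sphere_zero_iff_norm.mpr hu)⟩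
  have habs : ∀ j, 0 ≤ |∑ k, M j k * u0 k| := fun j => abs_nonneg _
  rcases (Finset.sum_nonneg fun j _ => habs j).lt_or_eq with h | h
  · exact h
  · exfalso
    have hz : ∀ j, ∑ k, M j k * u0 k = 0 := by
      intro j
      have := (Finset.sum_eq_zero_iff_of_nonneg (fun j _ => habs j)).mp h.symm j
        (Finset.mem_univ j)
      exact abs_eq_zero.mp this
    have hmv : M.mulVec (fun k => u0 k) = 0 := by
      ext j; simpa [Matrix.mulVec, dotProduct] using hz j
    have : (fun k => u0 k) = 0 := by
      have hinj := Matrix.mulVec_injective_iff_isUnit.mpr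
        (Matrix.isUnit_iff_isUnit_det M |>.mpr (isUnit_iff_ne_zero.mpr hM))
      exact hinj (show M.mulVec (fun k => u0 k) = M.mulVec 0 by
        rw [hmv, Matrix.mulVec_zero])
    have : u0 = 0 := by ext k; exact congrFun this k
    rw [this] at hu0n; simp at hu0n

theorem stmt_17 (n p : ℕ) (hnp : p ≤ n)
    (w : ℝ → ℝ) (c : ℝ) (hc : 0 < c)
    (hw : ∀ z : ℝ, 0 ≤ w z ∧ w z ≤ c / (1 + Real.exp |z|))
    (X : Matrix (Fin n) (Fin p) ℝ)
    (hspan : Submodule.span ℝ (Set.range fun i => (X i : Fin p → ℝ)) = ⊤)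
    (m : Fin n → ℝ) (hm : ∀ i, 0 < m i)
    (W : EuclideanSpace ℝ (Fin p) → Matrix (Fin n) (Fin n) ℝ)
    (hW : ∀ β, W β = Matrix.diagonal (fun i => w (∑ j, X i j * β j))) :
    Filter.Tendsto
      (fun r : ℝ => ⨆ u : {u : EuclideanSpace ℝ (Fin p) // ‖u‖ = 1},
        (X.transpose * Matrix.diagonal m * W (r • (u : EuclideanSpace ℝ (Fin p))) * X).det)
      Filter.atTop (nhds 0) := by
  classical
  rcases Nat.eq_zero_or_pos p with hp0 | hp
  · -- p = 0 : the unit sphere is empty, iSup is 0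
    subst hp0
    haveI : IsEmpty {u : EuclideanSpace ℝ (Fin 0) // ‖u‖ = 1} := by
      refine ⟨fun u => ?_⟩
      have h0 : (u : EuclideanSpace ℝ (Fin 0)) = 0 := by
        ext k; exact absurd k.2 (by omega)
      have := u.2
      rw [h0] at this
      simp at this
    simp only [Real.iSup_of_isEmpty]
    exact tendsto_const_nhds
  haveI : Nonempty (Fin p) := ⟨⟨0, hp⟩⟩
  haveI hNE : Nonempty {u : EuclideanSpace ℝ (Fin p) // ‖u‖ = 1} := by
    refine ⟨⟨EuclideanSpace.single ⟨0, hp⟩ 1, ?_⟩⟩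
    simp [EuclideanSpace.norm_single]
  -- the diagonal weights
  set d : EuclideanSpace ℝ (Fin p) → ℝ → Fin n → ℝ :=
    fun u r i => m i * w (r * ∑ j, X i j * u j) with hd
  have hd_nonneg : ∀ u r i, 0 ≤ d u r i :=
    fun u r i => mul_nonneg (hm i).le (hw _).1
  -- rewrite the matrix
  have hmat : ∀ (r : ℝ) (u : EuclideanSpace ℝ (Fin p)),
      X.transpose * Matrix.diagonal m * W (r • u) * X
        = X.transpose * Matrix.diagonal (d u r) * X := by
    intro r u
    have harg : (fun i => m i * w (∑ j, X i j * (r • u) j)) = d u r := by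
      funext i
      simp only [hd]
      congr 2
      rw [Finset.mul_sum]
      refine Finset.sum_congr rfl fun j _ => ?_
      have hru : (r • u) j = r * u j := rfl
      rw [hru]; ring
    have hdm : Matrix.diagonal m * Matrix.diagonal (fun i => w (∑ j, X i j * (r • u) j))
        = Matrix.diagonal (d u r) := by
      rw [Matrix.diagonal_mul_diagonal, harg]
    rw [hW, Matrix.mul_assoc (X.transpose) (Matrix.diagonal m), hdm]
  -- choose a lower bound δ f for each row-selection f with nonzero minor
  have hδex : ∀ f : Fin p → Fin n, ∃ δ : ℝ, 0 < δ ∧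
      ((X.submatrix f id).det ≠ 0 → ∀ u : EuclideanSpace ℝ (Fin p), ‖u‖ = 1 →
        δ ≤ ∑ j, |∑ k, X (f j) k * u k|) := by
    intro f
    by_cases hdf : (X.submatrix f id).det = 0
    · exact ⟨1, one_pos, fun h => absurd hdf h⟩
    · obtain ⟨δ, hδ, hδ2⟩ := aux_min hp (X.submatrix f id) hdf
      exact ⟨δ, hδ, fun _ u hu => hδ2 u hu⟩
  choose δ hδpos hδspec using hδex
  -- constants
  set K : (Fin p → Fin n) → ℝ :=
    fun f => (∏ j, |X (f j) j| * m (f j)) * c ^ p * |(X.submatrix f id).det| with hK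
  have hKnn : ∀ f, 0 ≤ K f := by
    intro f
    apply mul_nonneg (mul_nonneg ?_ (by positivity)) (abs_nonneg _)
    exact Finset.prod_nonneg fun j _ => mul_nonneg (abs_nonneg _) (hm _).le
  set g : ℝ → ℝ :=
    fun r => ∑ f : Fin p → Fin n, K f / (1 + Real.exp (r * (δ f / p))) with hg
  have hgnn : ∀ r, 0 ≤ g r := by
    intro r
    refine Finset.sum_nonneg fun f _ => div_nonneg (hKnn f) ?_
    positivity
  -- g tends to 0
  have hg0 : Filter.Tendsto g Filter.atTop (nhds 0) := by
    rw [show (0 : ℝ) = ∑ f : Fin p → Fin n, (0:ℝ) by simp]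
    refine tendsto_finset_sum _ fun f _ => ?_
    refine Filter.Tendsto.div_atTop tendsto_const_nhds ?_
    refine Filter.tendsto_atTop_add_const_left _ 1 ?_
    refine Real.tendsto_exp_atTop.comp ?_
    exact Filter.Tendsto.atTop_mul_const (div_pos (hδpos f) (by positivity)) Filter.tendsto_id
  -- key pointwise bound
  have hbound : ∀ r : ℝ, 0 ≤ r → ∀ u : EuclideanSpace ℝ (Fin p), ‖u‖ = 1 →
      (X.transpose * Matrix.diagonal m * W (r • u) * X).det ≤ g r := by
    intro r hr u hu
    rw [hmat r u, det_expand]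
    refine Finset.sum_le_sum fun f _ => ?_
    set E : ℝ := Real.exp (r * (δ f / p)) with hE
    have hEpos : (0:ℝ) < 1 + E := by positivity
    by_cases hdf : (X.submatrix f id).det = 0
    · rw [hdf, mul_zero]
      exact div_nonneg (hKnn f) hEpos.le
    · -- find a coordinate with a large inner product
      have hsum := hδspec f hdf u hu
      have hj0 : ∃ j0 : Fin p, δ f / p ≤ |∑ k, X (f j0) k * u k| := by
        by_contra hcon
        push_neg at hcon
        have hlt : ∑ j, |∑ k, X (f j) k * u k| < ∑ _j : Fin p, δ f / p :=
          Finset.sum_lt_sum_of_nonempty Finset.univ_nonempty fun j _ => by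
            simpa using hcon j
        rw [Finset.sum_const, Finset.card_univ, Fintype.card_fin, nsmul_eq_mul,
          mul_div_cancel₀ _ (by positivity : (p:ℝ) ≠ 0)] at hlt
        exact absurd hsum (not_le.mpr hlt)
      obtain ⟨j0, hj0⟩ := hj0
      -- bound each factor
      have hfac : ∀ j : Fin p, |X (f j) j * d u r (f j)|
          ≤ |X (f j) j| * m (f j) * (if j = j0 then c / (1 + E) else c) := by
        intro j
        rw [abs_mul, abs_of_nonneg (hd_nonneg u r (f j))]
        simp only [hd]
        rw [mul_assoc]
        refine mul_le_mul_of_nonneg_left ?_ (abs_nonneg _)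
        refine mul_le_mul_of_nonneg_left ?_ (hm _).le
        have hw2 := (hw (r * ∑ k, X (f j) k * u k)).2
        by_cases hj : j = j0
        · subst hj
          rw [if_pos rfl]
          refine hw2.trans ?_
          refine div_le_div_of_nonneg_left hc.le (by positivity) ?_
          refine add_le_add_right ?_ 1
          refine Real.exp_le_exp.mpr ?_
          rw [abs_mul, abs_of_nonneg hr]
          exact mul_le_mul_of_nonneg_left hj0 hr
        · rw [if_neg hj]
          refine hw2.trans ?_
          refine div_le_self hc.le ?_
          have := Real.exp_pos |r * ∑ k, X (f j) k * u k|
          linarith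
      -- combine
      calc (∏ j, X (f j) j * d u r (f j)) * (X.submatrix f id).det
          ≤ |(∏ j, X (f j) j * d u r (f j)) * (X.submatrix f id).det| := le_abs_self _
        _ = (∏ j, |X (f j) j * d u r (f j)|) * |(X.submatrix f id).det| := by
            rw [abs_mul, Finset.abs_prod]
        _ ≤ (∏ j, |X (f j) j| * m (f j) * (if j = j0 then c / (1 + E) else c))
              * |(X.submatrix f id).det| := by
            refine mul_le_mul_of_nonneg_right ?_ (abs_nonneg _)
            exact Finset.prod_le_prod (fun j _ => abs_nonneg _) (fun j _ => hfac j)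
        _ = (∏ j, |X (f j) j| * m (f j))
              * (c ^ p / (1 + E)) * |(X.submatrix f id).det| := by
            have hite : (∏ j : Fin p, (if j = j0 then c / (1 + E) else c))
                = c ^ p / (1 + E) := by
              rw [← Finset.mul_prod_erase Finset.univ _ (Finset.mem_univ j0), if_pos rfl,
                Finset.prod_congr rfl (fun j hj => if_neg (Finset.ne_of_mem_erase hj)),
                Finset.prod_const, Finset.card_erase_of_mem (Finset.mem_univ j0),
                Finset.card_univ, Fintype.card_fin, div_mul_eq_mul_div, mul_comm c,
                ← pow_succ, Nat.sub_add_cancel hp]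
            rw [Finset.prod_mul_distrib, hite]
        _ = K f / (1 + E) := by
            simp only [hK]
            ring
  -- squeeze
  refine tendsto_of_tendsto_of_tendsto_of_le_of_le' tendsto_const_nhds hg0 ?_ ?_
  · refine Filter.Eventually.of_forall fun r => ?_
    refine Real.iSup_nonneg fun u => ?_
    rw [hmat r u]
    exact psd_det_nonneg _ (psd_aux X _ (hd_nonneg u r))
  · filter_upwards [Filter.eventually_ge_atTop (0:ℝ)] with r hr
    exact Real.iSup_le (fun u => hbound r hr u u.2) (hgnn r)
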